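/- Let S be the unilateral shift on ℓ²(ℕ) and let Q ∈ B(ℓ²(ℕ)) be an idempotent commuting with S. Then either Q = I or S − Q is not invertible. Consequently S is not a strongly clean element of B(ℓ²(ℕ)): there is no idempotent Q commuting with S such that S − Q is invertible. -/

import Mathlib

noncomputable def tail13 (x : lp (fun _ : ℕ => ℂ) 2) : lp (fun _ : ℕ => ℂ) 2 :=
  ⟨fun n => x (n + 1), by
    apply memℓp_gen
    have h := (memℓp_gen_iff (p := 2) (by norm_num)).1 (lp.memℓp x)
    exact h.comp_injective (add_left_injective 1)⟩

@[simp] lemma tail13_apply (x : lp (fun _ : ℕ => ℂ) 2) (n : ℕ) :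
    (tail13 x) n = x (n + 1) := rfl

/-- For the unilateral shift `S` on `ℓ²(ℕ)`: every idempotent `Q` commuting with `S`
satisfies `Q = I` or `S - Q` not invertible. Consequently `S` is not strongly clean:
there is no idempotent commuting with `S` such that `S - Q` is invertible. -/
theorem stmt13 (S : lp (fun _ : ℕ => ℂ) 2 →L[ℂ] lp (fun _ : ℕ => ℂ) 2)
    (hS0 : ∀ x : lp (fun _ : ℕ => ℂ) 2, S x 0 = 0)
    (hS : ∀ (x : lp (fun _ : ℕ => ℂ) 2) (n : ℕ), S x (n + 1) = x n) :
    (∀ Q : lp (fun _ : ℕ => ℂ) 2 →L[ℂ] lp (fun _ : ℕ => ℂ) 2,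
        IsIdempotentElem Q → Q * S = S * Q → (Q = 1 ∨ ¬ IsUnit (S - Q))) ∧
      ¬ ∃ Q : lp (fun _ : ℕ => ℂ) 2 →L[ℂ] lp (fun _ : ℕ => ℂ) 2,
          IsIdempotentElem Q ∧ Q * S = S * Q ∧ IsUnit (S - Q) := by
  set H := lp (fun _ : ℕ => ℂ) 2
  set δ : H := lp.single 2 0 1 with hδ
  have hδ0 : δ 0 = 1 := lp.single_apply_self 2 0 1
  have hδs : ∀ n : ℕ, δ (n + 1) = 0 := fun n =>
    lp.single_apply_ne 2 0 1 (by omega)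
  -- key identity : S (tail x) = x - x 0 • δ
  have key : ∀ x : H, S (tail13 x) = x - x 0 • δ := by
    intro x
    apply lp.ext
    funext n
    have hc : (x - x 0 • δ) n = x n - x 0 * δ n := by
      rw [lp.coeFn_sub, Pi.sub_apply, lp.coeFn_smul, Pi.smul_apply, smul_eq_mul]
    cases n with
    | zero => rw [hS0, hc, hδ0]; ring
    | succ m => rw [hS, hc, hδs, tail13_apply]; ring
  -- main lemma
  have main : ∀ Q : H →L[ℂ] H, IsIdempotentElem Q → Q * S = S * Q →
      (Q = 1 ∨ ¬ IsUnit (S - Q)) := by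
    intro Q hQ hcomm
    have hQS : ∀ y : H, Q (S y) = S (Q y) := by
      intro y
      have := congrArg (fun T : H →L[ℂ] H => T y) hcomm
      simpa using this
    set c : H := Q δ with hc
    -- recursion : Q x = S (Q (tail x)) + x 0 • c
    have hrec : ∀ x : H, Q x = S (Q (tail13 x)) + x 0 • c := by
      intro x
      have h1 : Q (S (tail13 x)) = Q x - x 0 • c := by
        rw [key x, map_sub, map_smul]
      rw [hQS] at h1
      rw [h1]; abel
    have rec0 : ∀ x : H, Q x 0 = x 0 * c 0 := by
      intro x
      have := congrArg (fun y : H => y 0) (hrec x)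
      simp only at this
      rw [this, lp.coeFn_add, Pi.add_apply, hS0, lp.coeFn_smul, Pi.smul_apply,
        smul_eq_mul, zero_add]
    have recn : ∀ (x : H) (n : ℕ), Q x (n + 1) = Q (tail13 x) n + x 0 * c (n + 1) := by
      intro x n
      have := congrArg (fun y : H => y (n + 1)) (hrec x)
      simp only at this
      rw [this, lp.coeFn_add, Pi.add_apply, hS, lp.coeFn_smul, Pi.smul_apply,
        smul_eq_mul]
    have hQc : Q c = c := by
      have := congrArg (fun T : H →L[ℂ] H => T δ) hQ
      simpa [ContinuousLinearMap.mul_apply] using this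
    have hc0 : c 0 * c 0 = c 0 := by
      have := rec0 c
      rw [hQc] at this
      -- c 0 = c 0 * c 0
      linear_combination -this
    by_cases h0 : c 0 = 1
    · -- Q = 1
      left
      -- iterated tails of c : d k, with Q (d (k+1)) = 0
      set d : ℕ → H := fun k => tail13^[k] c with hd
      have hdsucc : ∀ k, d (k + 1) = tail13 (d k) := by
        intro k
        simp [hd, Function.iterate_succ_apply']
      have hdcoord : ∀ k n, d k n = c (n + k) := by
        intro k
        induction k with
        | zero => intro n; simp [hd]
        | succ m ih =>
          intro n
          have he : n + 1 + m = n + (m + 1) := by omega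
          rw [hdsucc, tail13_apply, ih, he]
      have hQd : ∀ k, Q (d (k + 1)) = 0 := by
        intro k
        induction k with
        | zero =>
          apply lp.ext; funext n
          have h1 := recn c n
          rw [hQc, h0] at h1
          have : Q (tail13 c) n = 0 := by linear_combination -h1
          simpa [hdsucc, hd] using this
        | succ m ih =>
          have hck : c (m + 1) = 0 := by
            have := rec0 (d (m + 1))
            rw [ih] at this
            have h2 : (0 : H) (0 : ℕ) = 0 := rfl
            rw [h2] at this
            have h3 := hdcoord (m + 1) 0
            rw [h0, mul_one] at this
            rw [← this] at h3
            simpa using h3.symm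
          apply lp.ext; funext n
          have h1 := recn (d (m + 1)) n
          rw [ih, ← hdsucc] at h1
          have h2 : (0 : H) (n + 1) = 0 := rfl
          rw [h2] at h1
          have h3 : d (m + 1) 0 = c (m + 1) := by simpa using hdcoord (m + 1) 0
          rw [h3, hck] at h1
          have : Q (d (m + 2)) n = 0 := by linear_combination -h1
          simpa using this
      have hcs : ∀ k : ℕ, c (k + 1) = 0 := by
        intro k
        have := rec0 (d (k + 1))
        rw [hQd k] at this
        have h2 : (0 : H) (0 : ℕ) = 0 := rfl
        rw [h2, h0, mul_one] at this
        have h3 := hdcoord (k + 1) 0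
        rw [← this] at h3
        simpa using h3.symm
      -- now Q x n = x n for all x n
      have hQ1 : ∀ (n : ℕ) (x : H), Q x n = x n := by
        intro n
        induction n with
        | zero => intro x; rw [rec0, h0, mul_one]
        | succ m ih =>
          intro x
          rw [recn, hcs, mul_zero, add_zero, ih, tail13_apply]
      refine ContinuousLinearMap.ext fun x => ?_
      rw [ContinuousLinearMap.one_apply]
      exact lp.ext (funext fun n => hQ1 n x)
    · -- c 0 = 0, show S - Q not invertible
      right
      have hc00 : c 0 = 0 := by
        have hz : c 0 * (c 0 - 1) = 0 := by linear_combination hc0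
        rcases mul_eq_zero.1 hz with h | h
        · exact h
        · exact absurd (by linear_combination h) h0
      intro hu
      have hzero : ∀ x : H, (S - Q) x 0 = 0 := by
        intro x
        rw [ContinuousLinearMap.sub_apply, lp.coeFn_sub, Pi.sub_apply, hS0,
          rec0, hc00, mul_zero, sub_zero]
      obtain ⟨u, hu⟩ := hu
      have hsurj : (S - Q) ((↑u⁻¹ : H →L[ℂ] H) δ) = δ := by
        rw [← hu]
        calc (↑u : H →L[ℂ] H) ((↑u⁻¹ : H →L[ℂ] H) δ)
            = (↑(u * u⁻¹) : H →L[ℂ] H) δ := rfl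
          _ = δ := by simp
      have := hzero ((↑u⁻¹ : H →L[ℂ] H) δ)
      rw [hsurj, hδ0] at this
      exact one_ne_zero this
  refine ⟨main, ?_⟩
  rintro ⟨Q, hQ, hcomm, hu⟩
  rcases main Q hQ hcomm with rfl | h
  · -- S - 1 is not invertible
    rcases hu with ⟨u, hu⟩
    have hsurj : (S - 1) ((↑u⁻¹ : H →L[ℂ] H) δ) = δ := by
      rw [← hu]
      calc (↑u : H →L[ℂ] H) ((↑u⁻¹ : H →L[ℂ] H) δ)
          = (↑(u * u⁻¹) : H →L[ℂ] H) δ := rfl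
        _ = δ := by simp
    set x : H := (↑u⁻¹ : H →L[ℂ] H) δ with hx
    -- coordinates : -x 0 = ... ; x n - x (n+1) appropriately
    have hco : ∀ n, (S - 1) x n = S x n - x n := by
      intro n
      rw [ContinuousLinearMap.sub_apply, ContinuousLinearMap.one_apply,
        lp.coeFn_sub, Pi.sub_apply]
    have h0' : x 0 = -1 := by
      have := congrArg (fun y : H => y 0) hsurj
      simp only at this
      rw [hco, hS0, hδ0] at this
      linear_combination -this
    have hconst : ∀ n, x n = -1 := by
      intro n
      induction n with
      | zero => exact h0'
      | succ m ih =>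
        have := congrArg (fun y : H => y (m + 1)) hsurj
        simp only at this
        rw [hco, hS, hδs] at this
        linear_combination ih - this
    have hsum := (memℓp_gen_iff (p := 2) (by norm_num)).1 (lp.memℓp x)
    have : Summable (fun _ : ℕ => (1 : ℝ)) := by
      have heq : (fun n : ℕ => ‖x n‖ ^ (2 : ENNReal).toReal) = fun _ : ℕ => (1 : ℝ) := by
        funext n
        rw [hconst n]
        simp
      rwa [heq] at hsum
    rw [summable_const_iff] at this
    exact one_ne_zero this
  · exact h hu
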